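/- Existence and uniqueness of currents in a grid network: given a source s (a real function on vertices of the N×N grid vanishing at nonboundary vertices), there exists a function j on oriented edges with ∂j = −s and δj = 0 if and only if the sum of s over all vertices is zero; and if it exists, it is unique. -/

import Mathlib

/-- A function on the edges of the `N×N` grid is given by its values on
horizontal edges `jh i j` (from `(i,j)` to `(i+1,j)`, for `i < N`, `j ≤ N`)
and vertical edges `jv i j` (from `(i,j)` to `(i,j+1)`, for `i ≤ N`, `j < N`).
The boundary `∂j` at the vertex `(i,j)`: incoming minus outgoing values. -/
def gridBdry (N : ℕ) (jh jv : ℕ → ℕ → ℝ) (i j : ℕ) : ℝ :=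
  (if 1 ≤ i then jh (i - 1) j else 0) + (if 1 ≤ j then jv i (j - 1) else 0)
    - (if i < N then jh i j else 0) - (if j < N then jv i j else 0)

/-- The coboundary `δj` on the face with minimal vertex `(i,j)` (for `i,j < N`),
with counterclockwise-oriented boundary. -/
def gridCob (jh jv : ℕ → ℕ → ℝ) (i j : ℕ) : ℝ :=
  jh i j + jv (i + 1) j - jh i (j + 1) - jv i j

/-- The Kirchhoff laws: `∂j = −s` at every vertex and `δj = 0` on every face. -/
def IsCurrent (N : ℕ) (s jh jv : ℕ → ℕ → ℝ) : Prop :=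
  (∀ i j, i ≤ N → j ≤ N → gridBdry N jh jv i j = - s i j) ∧
  (∀ i j, i < N → j < N → gridCob jh jv i j = 0)

open Finset

section Aux

/-- Weighted telescoping lemma in one direction. -/
lemma grid_tele2 (N : ℕ) (φ f : ℕ → ℝ) :
    ∑ i ∈ range (N+1), φ i * ((if 1 ≤ i then f (i-1) else 0) - (if i < N then f i else 0))
      = ∑ i ∈ range N, f i * (φ (i+1) - φ i) := by
  have h1 : ∑ i ∈ range (N+1), φ i * (if 1 ≤ i then f (i-1) else 0)
      = ∑ i ∈ range N, φ (i+1) * f i := by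
    rw [Finset.sum_range_succ']; simp
  have h2 : ∑ i ∈ range (N+1), φ i * (if i < N then f i else 0)
      = ∑ i ∈ range N, φ i * f i := by
    rw [Finset.sum_range_succ]
    simp only [lt_irrefl, if_neg, mul_zero, add_zero, if_false]
    exact Finset.sum_congr rfl fun i hi => by rw [if_pos (mem_range.mp hi)]
  simp only [mul_sub]
  rw [Finset.sum_sub_distrib, h1, h2, ← Finset.sum_sub_distrib]
  exact Finset.sum_congr rfl fun i _ => by ring

/-- Summation by parts over the grid. -/
lemma grid_sum_bdry (N : ℕ) (jh jv φ : ℕ → ℕ → ℝ) :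
    ∑ i ∈ range (N+1), ∑ j ∈ range (N+1), φ i j * gridBdry N jh jv i j
      = (∑ j ∈ range (N+1), ∑ i ∈ range N, jh i j * (φ (i+1) j - φ i j))
      + (∑ i ∈ range (N+1), ∑ j ∈ range N, jv i j * (φ i (j+1) - φ i j)) := by
  have key : ∀ i j, φ i j * gridBdry N jh jv i j
      = φ i j * ((if 1 ≤ i then jh (i-1) j else 0) - (if i < N then jh i j else 0))
      + φ i j * ((if 1 ≤ j then jv i (j-1) else 0) - (if j < N then jv i j else 0)) := by
    intro i j; simp only [gridBdry]; ring
  simp only [key]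
  rw [Finset.sum_congr rfl fun i _ => Finset.sum_add_distrib, Finset.sum_add_distrib]
  congr 1
  · rw [Finset.sum_comm]
    exact Finset.sum_congr rfl fun j _ => grid_tele2 N (fun i => φ i j) (fun i => jh i j)
  · exact Finset.sum_congr rfl fun i _ => grid_tele2 N (φ i) (jv i)

/-- The total boundary sums to zero. -/
lemma grid_sum_bdry_zero (N : ℕ) (jh jv : ℕ → ℕ → ℝ) :
    ∑ i ∈ range (N+1), ∑ j ∈ range (N+1), gridBdry N jh jv i j = 0 := by
  have := grid_sum_bdry N jh jv (fun _ _ => 1)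
  simp only [one_mul, sub_self, mul_zero, Finset.sum_const_zero, add_zero] at this
  exact this

/-- Extension of a function on grid vertices to all of `ℕ × ℕ` by zero. -/
def gext (N : ℕ) (φ : Fin (N+1) × Fin (N+1) → ℝ) (i j : ℕ) : ℝ :=
  if h : i < N+1 ∧ j < N+1 then φ (⟨i, h.1⟩, ⟨j, h.2⟩) else 0

/-- Horizontal discrete gradient. -/
def gdh (f : ℕ → ℕ → ℝ) (i j : ℕ) : ℝ := f (i+1) j - f i j
/-- Vertical discrete gradient. -/
def gdv (f : ℕ → ℕ → ℝ) (i j : ℕ) : ℝ := f i (j+1) - f i j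

lemma gext_add (N : ℕ) (x y : (Fin (N+1) × Fin (N+1)) → ℝ) (i j : ℕ) :
    gext N (x + y) i j = gext N x i j + gext N y i j := by
  unfold gext; split_ifs <;> simp

lemma gext_smul (N : ℕ) (c : ℝ) (x : (Fin (N+1) × Fin (N+1)) → ℝ) (i j : ℕ) :
    gext N (c • x) i j = c * gext N x i j := by
  unfold gext; split_ifs <;> simp

/-- The discrete (negative) Laplacian with Neumann boundary conditions. -/
def Lmap (N : ℕ) : ((Fin (N+1) × Fin (N+1)) → ℝ) →ₗ[ℝ] ((Fin (N+1) × Fin (N+1)) → ℝ) where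
  toFun φ v := gridBdry N (gdh (gext N φ)) (gdv (gext N φ)) v.1 v.2
  map_add' x y := by
    funext v
    have hh : ∀ p q, gdh (gext N (x + y)) p q = gdh (gext N x) p q + gdh (gext N y) p q := by
      intro p q; simp [gdh, gext_add]; ring
    have hv : ∀ p q, gdv (gext N (x + y)) p q = gdv (gext N x) p q + gdv (gext N y) p q := by
      intro p q; simp [gdv, gext_add]; ring
    simp only [gridBdry, Pi.add_apply, hh, hv]
    split_ifs <;> ring
  map_smul' c x := by
    funext v
    have hh : ∀ p q, gdh (gext N (c • x)) p q = c * gdh (gext N x) p q := by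
      intro p q; simp [gdh, gext_smul]; ring
    have hv : ∀ p q, gdv (gext N (c • x)) p q = c * gdv (gext N x) p q := by
      intro p q; simp [gdv, gext_smul]; ring
    simp only [gridBdry, Pi.smul_apply, RingHom.id_apply, smul_eq_mul, hh, hv]
    split_ifs <;> ring

/-- Summation over all grid vertices, as a linear map. -/
def gsum (N : ℕ) : ((Fin (N+1) × Fin (N+1)) → ℝ) →ₗ[ℝ] ℝ where
  toFun φ := ∑ v, φ v
  map_add' x y := by simp [Finset.sum_add_distrib]
  map_smul' c x := by simp [Finset.mul_sum]

lemma grid_sum_fin_eq (N : ℕ) (g : ℕ → ℕ → ℝ) :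
    ∑ v : Fin (N+1) × Fin (N+1), g v.1 v.2
      = ∑ i ∈ range (N+1), ∑ j ∈ range (N+1), g i j := by
  rw [Fintype.sum_prod_type]
  simp only [Fin.sum_univ_eq_sum_range]
  exact Fin.sum_univ_eq_sum_range (fun i => ∑ j ∈ range (N+1), g i j) (N+1)

lemma gsum_Lmap (N : ℕ) (φ : (Fin (N+1) × Fin (N+1)) → ℝ) :
    gsum N (Lmap N φ) = 0 := by
  show ∑ v : Fin (N+1) × Fin (N+1),
      gridBdry N (gdh (gext N φ)) (gdv (gext N φ)) v.1 v.2 = 0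
  rw [grid_sum_fin_eq]
  exact grid_sum_bdry_zero N _ _

lemma range_le_ker (N : ℕ) : LinearMap.range (Lmap N) ≤ LinearMap.ker (gsum N) := by
  rintro x ⟨φ, rfl⟩
  exact gsum_Lmap N φ

lemma gext_one (N : ℕ) (i j : ℕ) (hi : i ≤ N) (hj : j ≤ N) :
    gext N (fun _ => (1:ℝ)) i j = 1 :=
  dif_pos ⟨by omega, by omega⟩

lemma Lmap_one (N : ℕ) : Lmap N (fun _ => (1:ℝ)) = 0 := by
  funext v
  obtain ⟨p, q⟩ := v
  have hp : (p:ℕ) ≤ N := Nat.lt_succ_iff.mp p.isLt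
  have hq : (q:ℕ) ≤ N := Nat.lt_succ_iff.mp q.isLt
  have hdh : ∀ i j, i ≤ N → j ≤ N → i + 1 ≤ N →
      gdh (gext N (fun _ => (1:ℝ))) i j = 0 := by
    intro i j hi hj hi1
    simp [gdh, gext_one N _ _ hi hj, gext_one N _ _ hi1 hj]
  have hdv : ∀ i j, i ≤ N → j ≤ N → j + 1 ≤ N →
      gdv (gext N (fun _ => (1:ℝ))) i j = 0 := by
    intro i j hi hj hj1
    simp [gdv, gext_one N _ _ hi hj, gext_one N _ _ hi hj1]
  show gridBdry N (gdh (gext N fun _ => 1)) (gdv (gext N fun _ => 1)) p q = 0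
  unfold gridBdry
  have t1 : (if 1 ≤ (p:ℕ) then gdh (gext N fun _ => (1:ℝ)) ((p:ℕ) - 1) q else 0) = 0 := by
    split_ifs with h
    · exact hdh _ _ (by omega) hq (by omega)
    · rfl
  have t2 : (if 1 ≤ (q:ℕ) then gdv (gext N fun _ => (1:ℝ)) p ((q:ℕ) - 1) else 0) = 0 := by
    split_ifs with h
    · exact hdv _ _ hp (by omega) (by omega)
    · rfl
  have t3 : (if (p:ℕ) < N then gdh (gext N fun _ => (1:ℝ)) p q else 0) = 0 := by
    split_ifs with h
    · exact hdh _ _ hp hq (by omega)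
    · rfl
  have t4 : (if (q:ℕ) < N then gdv (gext N fun _ => (1:ℝ)) p q else 0) = 0 := by
    split_ifs with h
    · exact hdv _ _ hp hq (by omega)
    · rfl
  rw [t1, t2, t3, t4]
  simp

lemma ker_Lmap (N : ℕ) :
    LinearMap.ker (Lmap N) = Submodule.span ℝ {(fun _ => (1:ℝ) : (Fin (N+1) × Fin (N+1)) → ℝ)} := by
  apply le_antisymm
  · intro φ hφ
    rw [LinearMap.mem_ker] at hφ
    set Φ := gext N φ with hΦ
    have h0 : ∀ i j, i ≤ N → j ≤ N → gridBdry N (gdh Φ) (gdv Φ) i j = 0 := by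
      intro i j hi hj
      have := congrFun hφ (⟨i, by omega⟩, ⟨j, by omega⟩)
      exact this
    have hsum0 : ∑ i ∈ range (N+1), ∑ j ∈ range (N+1),
        Φ i j * gridBdry N (gdh Φ) (gdv Φ) i j = 0 := by
      apply Finset.sum_eq_zero
      intro i hi
      apply Finset.sum_eq_zero
      intro j hj
      rw [h0 i j (Nat.lt_succ_iff.mp (mem_range.mp hi)) (Nat.lt_succ_iff.mp (mem_range.mp hj))]
      ring
    rw [grid_sum_bdry] at hsum0
    have hAform : ∀ j i, gdh Φ i j * (Φ (i+1) j - Φ i j) = gdh Φ i j * gdh Φ i j := by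
      intro j i; rfl
    have hBform : ∀ i j, gdv Φ i j * (Φ i (j+1) - Φ i j) = gdv Φ i j * gdv Φ i j := by
      intro i j; rfl
    simp only [hAform, hBform] at hsum0
    have hA : (0:ℝ) ≤ ∑ j ∈ range (N+1), ∑ i ∈ range N, gdh Φ i j * gdh Φ i j :=
      Finset.sum_nonneg fun j _ => Finset.sum_nonneg fun i _ => mul_self_nonneg _
    have hB : (0:ℝ) ≤ ∑ i ∈ range (N+1), ∑ j ∈ range N, gdv Φ i j * gdv Φ i j :=
      Finset.sum_nonneg fun i _ => Finset.sum_nonneg fun j _ => mul_self_nonneg _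
    have hA0 : ∑ j ∈ range (N+1), ∑ i ∈ range N, gdh Φ i j * gdh Φ i j = 0 := by linarith
    have hB0 : ∑ i ∈ range (N+1), ∑ j ∈ range N, gdv Φ i j * gdv Φ i j = 0 := by linarith
    have hdh0 : ∀ i j, i < N → j ≤ N → gdh Φ i j = 0 := by
      intro i j hi hj
      have h1 := (Finset.sum_eq_zero_iff_of_nonneg
        (fun j _ => Finset.sum_nonneg fun i _ => mul_self_nonneg (gdh Φ i j))).mp hA0
        j (mem_range.mpr (by omega))
      have h2 := (Finset.sum_eq_zero_iff_of_nonneg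
        (fun i _ => mul_self_nonneg (gdh Φ i j))).mp h1 i (mem_range.mpr hi)
      exact mul_self_eq_zero.mp h2
    have hdv0 : ∀ i j, i ≤ N → j < N → gdv Φ i j = 0 := by
      intro i j hi hj
      have h1 := (Finset.sum_eq_zero_iff_of_nonneg
        (fun i _ => Finset.sum_nonneg fun j _ => mul_self_nonneg (gdv Φ i j))).mp hB0
        i (mem_range.mpr (by omega))
      have h2 := (Finset.sum_eq_zero_iff_of_nonneg
        (fun j _ => mul_self_nonneg (gdv Φ i j))).mp h1 j (mem_range.mpr hj)
      exact mul_self_eq_zero.mp h2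
    have hrow : ∀ i, i ≤ N → Φ i 0 = Φ 0 0 := by
      intro i
      induction i with
      | zero => intro _; rfl
      | succ k ih =>
        intro h
        have : Φ (k+1) 0 = Φ k 0 := by
          have := hdh0 k 0 (by omega) (by omega)
          simp only [gdh] at this; linarith
        rw [this, ih (by omega)]
    have hconst : ∀ i j, i ≤ N → j ≤ N → Φ i j = Φ 0 0 := by
      intro i j hi
      induction j with
      | zero => intro _; exact hrow i hi
      | succ k ih =>
        intro h
        have : Φ i (k+1) = Φ i k := by
          have := hdv0 i k hi (by omega)
          simp only [gdv] at this; linarith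
        rw [this, ih (by omega)]
    rw [Submodule.mem_span_singleton]
    refine ⟨Φ 0 0, ?_⟩
    funext v
    obtain ⟨p, q⟩ := v
    have hv : φ (p, q) = Φ (p:ℕ) (q:ℕ) := by
      rw [hΦ]
      unfold gext
      rw [dif_pos ⟨p.isLt, q.isLt⟩]
    simp only [Pi.smul_apply, smul_eq_mul, mul_one]
    rw [hv, hconst _ _ (Nat.lt_succ_iff.mp p.isLt) (Nat.lt_succ_iff.mp q.isLt)]
  · rw [Submodule.span_le]
    intro x hx
    simp only [Set.mem_singleton_iff] at hx
    subst hx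
    exact LinearMap.mem_ker.mpr (Lmap_one N)

lemma range_Lmap (N : ℕ) : LinearMap.range (Lmap N) = LinearMap.ker (gsum N) := by
  have hcard : (0:ℝ) < ((N+1) * (N+1) : ℕ) := by positivity
  have hone : (fun _ => (1:ℝ) : (Fin (N+1) × Fin (N+1)) → ℝ) ≠ 0 := by
    intro h
    have := congrFun h (0, 0)
    simp at this
  have hker1 : Module.finrank ℝ (LinearMap.ker (Lmap N)) = 1 := by
    rw [ker_Lmap]
    exact finrank_span_singleton hone
  have hfr : Module.finrank ℝ ((Fin (N+1) × Fin (N+1)) → ℝ) = (N+1) * (N+1) := by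
    rw [Module.finrank_fintype_fun_eq_card]
    simp [Fintype.card_prod]
  have hsur : Function.Surjective (gsum N) := by
    intro r
    refine ⟨(r / (((N+1) * (N+1) : ℕ) : ℝ)) • (fun _ => (1:ℝ)), ?_⟩
    show ∑ v : Fin (N+1) × Fin (N+1), (r / (((N+1) * (N+1) : ℕ) : ℝ)) * 1 = r
    rw [Finset.sum_const]
    simp only [card_univ, Fintype.card_prod, Fintype.card_fin, smul_eq_mul, mul_one]
    rw [Nat.cast_mul] at hcard ⊢
    rw [nsmul_eq_mul]
    push_cast
    field_simp
  have h1 := LinearMap.finrank_range_add_finrank_ker (Lmap N)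
  have h2 := LinearMap.finrank_range_add_finrank_ker (gsum N)
  rw [hker1, hfr] at h1
  rw [LinearMap.range_eq_top.mpr hsur, finrank_top, hfr] at h2
  have h3 : Module.finrank ℝ ℝ = 1 := Module.finrank_self ℝ
  rw [h3] at h2
  apply Submodule.eq_of_le_of_finrank_eq (range_le_ker N)
  omega

end Aux

/-- **Existence and uniqueness of currents in a grid network.**
Given a source `s` (a function on the vertices of the `N×N` grid vanishing at
nonboundary vertices), a current generated by `s` (i.e. `∂j = −s`, `δj = 0`)
exists if and only if the sum of `s` over all vertices is zero; and any two
currents generated by `s` agree on all edges. -/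
theorem grid_current_exists_unique (N : ℕ) (hN : 0 < N) (s : ℕ → ℕ → ℝ)
    (hs : ∀ i j, 0 < i → i < N → 0 < j → j < N → s i j = 0) :
    ((∃ jh jv : ℕ → ℕ → ℝ, IsCurrent N s jh jv) ↔
      ∑ i ∈ Finset.range (N + 1), ∑ j ∈ Finset.range (N + 1), s i j = 0) ∧
    (∀ jh jv jh' jv', IsCurrent N s jh jv → IsCurrent N s jh' jv' →
      (∀ i j, i < N → j ≤ N → jh i j = jh' i j) ∧
      (∀ i j, i ≤ N → j < N → jv i j = jv' i j)) := by
  constructor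
  · constructor
    · -- existence implies sum zero
      rintro ⟨jh, jv, hbd, _⟩
      have h0 := grid_sum_bdry_zero N jh jv
      have heq : ∑ i ∈ range (N+1), ∑ j ∈ range (N+1), gridBdry N jh jv i j
          = ∑ i ∈ range (N+1), ∑ j ∈ range (N+1), (- s i j) := by
        refine Finset.sum_congr rfl fun i hi => Finset.sum_congr rfl fun j hj => ?_
        exact hbd i j (Nat.lt_succ_iff.mp (mem_range.mp hi)) (Nat.lt_succ_iff.mp (mem_range.mp hj))
      rw [heq] at h0
      simp only [Finset.sum_neg_distrib] at h0
      linarith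
    · -- sum zero implies existence
      intro hsum
      set t : (Fin (N+1) × Fin (N+1)) → ℝ := fun v => - s v.1 v.2 with ht
      have htk : t ∈ LinearMap.ker (gsum N) := by
        rw [LinearMap.mem_ker]
        show ∑ v : Fin (N+1) × Fin (N+1), (- s v.1 v.2) = 0
        rw [grid_sum_fin_eq N (fun i j => - s i j)]
        simp only [Finset.sum_neg_distrib]
        rw [hsum]; ring
      rw [← range_Lmap] at htk
      obtain ⟨φ, hφ⟩ := htk
      refine ⟨gdh (gext N φ), gdv (gext N φ), ?_, ?_⟩
      · intro i j hi hj
        have := congrFun hφ (⟨i, by omega⟩, ⟨j, by omega⟩)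
        exact this
      · intro i j _ _
        simp only [gridCob, gdh, gdv]
        ring
  · -- uniqueness
    rintro jh jv jh' jv' ⟨hbd, hcb⟩ ⟨hbd', hcb'⟩
    set dh : ℕ → ℕ → ℝ := fun i j => jh i j - jh' i j with hdh
    set dv : ℕ → ℕ → ℝ := fun i j => jv i j - jv' i j with hdv
    have hb0 : ∀ i j, i ≤ N → j ≤ N → gridBdry N dh dv i j = 0 := by
      intro i j hi hj
      have h1 := hbd i j hi hj
      have h2 := hbd' i j hi hj
      simp only [gridBdry, hdh, hdv] at *
      split_ifs at h1 h2 ⊢ <;> linarith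
    have hc0 : ∀ i j, i < N → j < N → gridCob dh dv i j = 0 := by
      intro i j hi hj
      have h1 := hcb i j hi hj
      have h2 := hcb' i j hi hj
      simp only [gridCob, hdh, hdv] at *
      linarith
    -- construct the potential
    set φ : ℕ → ℕ → ℝ := fun i j =>
      (∑ k ∈ range i, dh k 0) + (∑ k ∈ range j, dv i k) with hφ
    have hgv : ∀ i j, φ i (j+1) - φ i j = dv i j := by
      intro i j
      simp only [hφ, Finset.sum_range_succ]
      ring
    have hgh : ∀ j, j ≤ N → ∀ i, i < N → φ (i+1) j - φ i j = dh i j := by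
      intro j
      induction j with
      | zero =>
        intro _ i _
        simp only [hφ, Finset.sum_range_succ, Finset.range_zero, Finset.sum_empty]
        ring
      | succ k ih =>
        intro hk i hi
        have hcob := hc0 i k hi (by omega)
        simp only [gridCob] at hcob
        have e1 : φ (i+1) (k+1) = φ (i+1) k + dv (i+1) k := by
          have := hgv (i+1) k; linarith
        have e2 : φ i (k+1) = φ i k + dv i k := by
          have := hgv i k; linarith
        have := ih (by omega) i hi
        rw [e1, e2]
        linarith
    -- energy argument
    have hsum0 : ∑ i ∈ range (N+1), ∑ j ∈ range (N+1),
        φ i j * gridBdry N dh dv i j = 0 := by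
      apply Finset.sum_eq_zero
      intro i hi
      apply Finset.sum_eq_zero
      intro j hj
      rw [hb0 i j (Nat.lt_succ_iff.mp (mem_range.mp hi)) (Nat.lt_succ_iff.mp (mem_range.mp hj))]
      ring
    rw [grid_sum_bdry] at hsum0
    have heqA : ∑ j ∈ range (N+1), ∑ i ∈ range N, dh i j * (φ (i+1) j - φ i j)
        = ∑ j ∈ range (N+1), ∑ i ∈ range N, dh i j * dh i j := by
      refine Finset.sum_congr rfl fun j hj => Finset.sum_congr rfl fun i hi => ?_
      rw [hgh j (Nat.lt_succ_iff.mp (mem_range.mp hj)) i (mem_range.mp hi)]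
    have heqB : ∑ i ∈ range (N+1), ∑ j ∈ range N, dv i j * (φ i (j+1) - φ i j)
        = ∑ i ∈ range (N+1), ∑ j ∈ range N, dv i j * dv i j := by
      refine Finset.sum_congr rfl fun i hi => Finset.sum_congr rfl fun j hj => ?_
      rw [hgv i j]
    rw [heqA, heqB] at hsum0
    have hA : (0:ℝ) ≤ ∑ j ∈ range (N+1), ∑ i ∈ range N, dh i j * dh i j :=
      Finset.sum_nonneg fun j _ => Finset.sum_nonneg fun i _ => mul_self_nonneg _
    have hB : (0:ℝ) ≤ ∑ i ∈ range (N+1), ∑ j ∈ range N, dv i j * dv i j :=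
      Finset.sum_nonneg fun i _ => Finset.sum_nonneg fun j _ => mul_self_nonneg _
    have hA0 : ∑ j ∈ range (N+1), ∑ i ∈ range N, dh i j * dh i j = 0 := by linarith
    have hB0 : ∑ i ∈ range (N+1), ∑ j ∈ range N, dv i j * dv i j = 0 := by linarith
    constructor
    · intro i j hi hj
      have h1 := (Finset.sum_eq_zero_iff_of_nonneg
        (fun j _ => Finset.sum_nonneg fun i _ => mul_self_nonneg (dh i j))).mp hA0
        j (mem_range.mpr (by omega))
      have h2 := (Finset.sum_eq_zero_iff_of_nonneg
        (fun i _ => mul_self_nonneg (dh i j))).mp h1 i (mem_range.mpr hi)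
      have := mul_self_eq_zero.mp h2
      simp only [hdh] at this
      linarith
    · intro i j hi hj
      have h1 := (Finset.sum_eq_zero_iff_of_nonneg
        (fun i _ => Finset.sum_nonneg fun j _ => mul_self_nonneg (dv i j))).mp hB0
        i (mem_range.mpr (by omega))
      have h2 := (Finset.sum_eq_zero_iff_of_nonneg
        (fun j _ => mul_self_nonneg (dv i j))).mp h1 j (mem_range.mpr hj)
      have := mul_self_eq_zero.mp h2
      simp only [hdv] at this
      linarith
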